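/- Let T be a finite tree with vertex labeling y whose cutsize (number of edges {u,v} of T with y(u) ≠ y(v)) is f. Then there exists a walk w = (w_0, w_1, …, w_m) in T that visits every vertex of T, such that the number of indices i ∈ {0,…,m−1} with y(w_i) ≠ y(w_{i+1}) is at most 2·f. -/

import Mathlib

open SimpleGraph

namespace SpineAux

variable {V : Type*}

/-- Transfer a walk whose support lies in `s` to the induced subgraph. -/
noncomputable def toInduce {G : SimpleGraph V} {s : Set V} {u v : V} (w : G.Walk u v) :
    (∀ a ∈ w.support, a ∈ s) → (hu : u ∈ s) → (hv : v ∈ s) →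
      (G.induce s).Walk ⟨u, hu⟩ ⟨v, hv⟩ := by
  induction w with
  | nil => exact fun _ _ _ => Walk.nil
  | @cons a b c hadj w' ih =>
    intro h hu hv
    have hb : b ∈ s := h b (by simp)
    exact Walk.cons (by simpa using hadj :
        (G.induce s).Adj ⟨a, hu⟩ ⟨b, hb⟩)
      (ih (fun a ha => h a (by simp [ha])) hb hv)

lemma not_mem_support_of_leaf {G : SimpleGraph V} {x p : V}
    (hnbr : ∀ q, G.Adj x q → q = p) {u v : V} (w : G.Walk u v) (hw : w.IsPath)
    (hu : u ≠ x) (hv : v ≠ x) : x ∉ w.support := by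
  classical
  intro hmem
  set t := w.takeUntil x hmem with ht
  set d := w.dropUntil x hmem with hd
  have hspec : t.append d = w := w.take_spec hmem
  have htn : ¬ t.reverse.Nil := Walk.not_nil_of_ne (Ne.symm hu)
  have hdn : ¬ d.Nil := Walk.not_nil_of_ne (Ne.symm hv)
  have h1 : G.Adj x (t.reverse.getVert 1) := t.reverse.adj_snd htn
  have h2 : G.Adj x (d.getVert 1) := d.adj_snd hdn
  have e1 : t.reverse.getVert 1 = p := hnbr _ h1
  have e2 : d.getVert 1 = p := hnbr _ h2
  have hxp : x ≠ p := e1 ▸ h1.ne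
  have hp1 : p ∈ t.support := by
    have h1' : t.reverse.getVert 1 ∈ t.reverse.support :=
      Walk.mem_support_iff_exists_getVert.mpr
        ⟨1, rfl, by rw [Walk.not_nil_iff_lt_length] at htn; omega⟩
    rw [e1, Walk.support_reverse, List.mem_reverse] at h1'
    exact h1'
  have hp2 : p ∈ d.support.tail := by
    have h2' : d.getVert 1 ∈ d.support :=
      Walk.mem_support_iff_exists_getVert.mpr
        ⟨1, rfl, by rw [Walk.not_nil_iff_lt_length] at hdn; omega⟩
    rw [e2] at h2'
    rw [d.support_eq_cons] at h2'
    rcases List.mem_cons.mp h2' with h2' | h2'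
    · exact absurd h2'.symm hxp
    · exact h2'
  have hnodup : (t.support ++ d.support.tail).Nodup := by
    rw [← Walk.support_append, hspec]; exact hw.2
  exact (List.nodup_append'.mp hnodup).2.2 hp1 hp2

lemma cutCount_map {W α : Type*} [DecidableEq α] {G : SimpleGraph V}
    {G' : SimpleGraph W} (F : G →g G') (z : W → α) {u v : V} (w : G.Walk u v) :
    ((w.map F).darts.filter (fun d => z d.fst ≠ z d.snd)).length
      = (w.darts.filter (fun d => z (F d.fst) ≠ z (F d.snd))).length := by
  induction w with
  | nil => simp
  | @cons a b c h p ih =>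
    simp only [Walk.map_cons, Walk.darts_cons, List.filter_cons]
    by_cases hz : z (F a) ≠ z (F b) <;> simpa [hz, Walk.darts_map] using ih


universe u

lemma length_filter_cons_cons {β : Type*} (pr : β → Bool) (a b : β) (l : List β) :
    (List.filter pr (a :: b :: l)).length =
      (List.filter pr l).length + (cond (pr a) 1 0) + (cond (pr b) 1 0) := by
  cases ha : pr a <;> cases hb : pr b <;> simp [List.filter_cons, ha, hb] <;> omega

lemma aux {α : Type*} [DecidableEq α] :
    ∀ (n : ℕ) {V : Type u} [Fintype V] (G : SimpleGraph V), Fintype.card V = n →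
      G.IsTree → ∀ (y : V → α),
      ∃ (a : V) (w : G.Walk a a),
        (∀ v : V, v ∈ w.support) ∧
        (w.darts.filter (fun d => y d.fst ≠ y d.snd)).length ≤
          2 * {e ∈ G.edgeSet | ∃ u v, e = s(u, v) ∧ y u ≠ y v}.ncard := by
  intro n
  induction n using Nat.strong_induction_on with
  | _ n ih =>
  intro V _ G hn hT y
  classical
  have hne : Nonempty V := hT.isConnected.nonempty
  by_cases hsmall : Fintype.card V ≤ 1
  · have hsub : Subsingleton V := Fintype.card_le_one_iff_subsingleton.mp hsmall
    obtain ⟨a⟩ := hne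
    exact ⟨a, Walk.nil, fun v => by simp [Subsingleton.elim v a], by simp⟩
  · push_neg at hsmall
    -- every vertex has a neighbor
    have hdeg1 : ∀ v : V, 0 < G.degree v := by
      intro v
      rw [G.degree_pos_iff_exists_adj]
      obtain ⟨u, hu⟩ := Fintype.exists_ne_of_one_lt_card hsmall v
      obtain ⟨w⟩ := hT.isConnected.preconnected v u
      exact ⟨w.getVert 1, w.adj_snd (Walk.not_nil_of_ne (Ne.symm hu))⟩
    -- there is a leaf
    have hleaf : ∃ x, G.degree x = 1 := by
      by_contra hcon
      push_neg at hcon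
      have h2 : ∀ v, 2 ≤ G.degree v := by
        intro v
        rcases Nat.lt_or_ge (G.degree v) 2 with h | h
        · interval_cases h' : G.degree v
          · exact absurd h' (by have := hdeg1 v; omega)
          · exact absurd h' (hcon v)
        · exact h
      have hsum := G.sum_degrees_eq_twice_card_edges
      have hcard := hT.card_edgeFinset
      have hle : 2 * Fintype.card V ≤ ∑ v, G.degree v := by
        calc 2 * Fintype.card V = ∑ _v : V, 2 := by
              simp [Finset.sum_const, Finset.card_univ, mul_comm]
          _ ≤ ∑ v, G.degree v := Finset.sum_le_sum fun v _ => h2 v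
      omega
    obtain ⟨x, hx⟩ := hleaf
    obtain ⟨p, hp⟩ := Finset.card_eq_one.mp (hx : (G.neighborFinset x).card = 1)
    have hadj_xp : G.Adj x p := by
      rw [← G.mem_neighborFinset, hp]; simp
    have hnbr : ∀ q, G.Adj x q → q = p := fun q hq => by
      have h := (G.mem_neighborFinset x q).mpr hq
      rw [hp] at h; simpa using h
    have hxp : x ≠ p := hadj_xp.ne
    set s : Set V := {x}ᶜ with hs
    have hmem_s : ∀ v : V, v ∈ s ↔ v ≠ x := fun v => by simp [hs]
    have hps : p ∈ s := (hmem_s p).mpr (Ne.symm hxp)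
    set G' := G.induce s with hG'
    have hcard' : Fintype.card ↥s < n := by
      rw [← hn]
      exact Fintype.card_subtype_lt (p := fun v => v ∈ s) (x := x) (by simp [hs])
    -- the embedding
    let F : G' →g G := (SimpleGraph.Embedding.induce s).toHom
    have hFinj : Function.Injective F := Subtype.val_injective
    -- G' is a tree
    have hT' : G'.IsTree := by
      rw [isTree_iff_existsUnique_path]
      refine ⟨⟨⟨p, hps⟩⟩, fun u v => ?_⟩
      obtain ⟨w0, hw0path, -⟩ := hT.existsUnique_path u.val v.val
      have hxs : x ∉ w0.support :=
        SpineAux.not_mem_support_of_leaf hnbr w0 hw0path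
          ((hmem_s _).mp u.2) ((hmem_s _).mp v.2)
      have hmem : ∀ a ∈ w0.support, a ∈ s := fun a ha =>
        (hmem_s a).mpr (fun h => hxs (h ▸ ha))
      have w1 : G'.Walk u v := SpineAux.toInduce w0 hmem u.2 v.2
      refine ⟨w1.toPath.val, w1.toPath.prop, fun q hq => ?_⟩
      apply Walk.map_injective_of_injective hFinj u v
      exact (hT.existsUnique_path _ _).unique
        (Walk.map_isPath_of_injective hFinj hq)
        (Walk.map_isPath_of_injective hFinj w1.toPath.prop)
    -- apply the induction hypothesis
    obtain ⟨a', w', hcov', hcut'⟩ := ih _ hcard' G' rfl hT' (fun v => y v.val)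
    set w1 : G.Walk a'.val a'.val := w'.map F with hw1
    have hpmem : p ∈ w1.support := by
      show p ∈ (w'.map F).support; rw [Walk.support_map]
      exact List.mem_map.mpr ⟨⟨p, hps⟩, hcov' _, rfl⟩
    set t := w1.takeUntil p hpmem with ht
    set d := w1.dropUntil p hpmem with hd
    have hspec : t.append d = w1 := w1.take_spec hpmem
    refine ⟨a'.val, t.append (Walk.cons hadj_xp.symm (Walk.cons hadj_xp d)), ?_, ?_⟩
    · intro v
      rw [Walk.mem_support_append_iff]
      by_cases hvx : v = x
      · right; subst hvx; simp
      · have hv1 : v ∈ w1.support := by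
          show v ∈ (w'.map F).support; rw [Walk.support_map]
          exact List.mem_map.mpr ⟨⟨v, (hmem_s v).mpr hvx⟩, hcov' _, rfl⟩
        rw [← hspec, Walk.mem_support_append_iff] at hv1
        rcases hv1 with h | h
        · left; exact h
        · right
          simp only [Walk.support_cons]
          exact List.mem_cons_of_mem _ (List.mem_cons_of_mem _ h)
    · -- counting cut darts
      set C : Set (Sym2 V) := {e ∈ G.edgeSet | ∃ u v, e = s(u, v) ∧ y u ≠ y v} with hC
      set C' : Set (Sym2 ↥s) :=
        {e ∈ G'.edgeSet | ∃ u v, e = s(u, v) ∧ y u.val ≠ y v.val} with hC'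
      have hinj2 : Function.Injective (Sym2.map (Subtype.val : ↥s → V)) :=
        Sym2.map.injective Subtype.val_injective
      have hCfin : C.Finite := Set.toFinite _
      have hC'fin : C'.Finite := Set.toFinite _
      have himg : (Sym2.map (Subtype.val : ↥s → V)) '' C' ⊆ C := by
        rintro e ⟨e', ⟨he'E, u, v, rfl, hyuv⟩, rfl⟩
        refine ⟨?_, u.val, v.val, by simp [Sym2.map_pair_eq], hyuv⟩
        rw [Sym2.map_pair_eq, mem_edgeSet]
        rw [mem_edgeSet] at he'E
        exact he'E
      have hnotmem : s(x, p) ∉ (Sym2.map (Subtype.val : ↥s → V)) '' C' := by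
        rintro ⟨e', ⟨-, u, v, rfl, -⟩, heq⟩
        rw [Sym2.map_pair_eq] at heq
        rcases Sym2.eq_iff.mp heq with ⟨h1, -⟩ | ⟨-, h2⟩
        · exact ((hmem_s _).mp u.2) h1
        · exact ((hmem_s _).mp v.2) h2
      have hncard : C'.ncard + (if y x = y p then 0 else 1) ≤ C.ncard := by
        by_cases hyy : y x = y p
        · simp only [hyy, if_pos, add_zero, if_true]
          calc C'.ncard = ((Sym2.map (Subtype.val : ↥s → V)) '' C').ncard :=
                (Set.ncard_image_of_injective _ hinj2).symm
            _ ≤ C.ncard := Set.ncard_le_ncard himg hCfin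
        · have hxpC : s(x, p) ∈ C := ⟨hadj_xp, x, p, rfl, hyy⟩
          have hsub : insert s(x, p) ((Sym2.map (Subtype.val : ↥s → V)) '' C') ⊆ C :=
            Set.insert_subset hxpC himg
          have hle := Set.ncard_le_ncard hsub hCfin
          rw [Set.ncard_insert_of_notMem hnotmem (hC'fin.image _),
            Set.ncard_image_of_injective _ hinj2] at hle
          simpa [hyy] using hle
      have hmapcount :
          (w1.darts.filter (fun dd => y dd.fst ≠ y dd.snd)).length ≤ 2 * C'.ncard := by
        rw [hw1]
        exact le_trans (le_of_eq (SpineAux.cutCount_map F y w')) hcut'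
      have htd : (t.darts.filter (fun dd => y dd.fst ≠ y dd.snd)).length
          + (d.darts.filter (fun dd => y dd.fst ≠ y dd.snd)).length
          = (w1.darts.filter (fun dd => y dd.fst ≠ y dd.snd)).length := by
        rw [← hspec, Walk.darts_append, List.filter_append, List.length_append]
      have hWdarts : (t.append (Walk.cons hadj_xp.symm (Walk.cons hadj_xp d))).darts
          = t.darts ++ (⟨(p, x), hadj_xp.symm⟩ :: ⟨(x, p), hadj_xp⟩ :: d.darts) := by
        rw [Walk.darts_append, Walk.darts_cons, Walk.darts_cons]
      rw [hWdarts, List.filter_append, List.length_append,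
        length_filter_cons_cons]
      by_cases hyy : y x = y p
      · have c1 : (decide (y p ≠ y x)) = false := by simp [hyy]
        have c2 : (decide (y x ≠ y p)) = false := by simp [hyy]
        simp only [hyy, if_pos, add_zero, if_true] at hncard
        simp only [ne_eq] at htd hmapcount ⊢
        simp only [c1, c2, cond_false, add_zero] at *
        omega
      · simp only [hyy, if_neg, if_false] at hncard
        have c1 : (decide (y p ≠ y x)) = true := by simp [hyy]; exact fun h => hyy h.symm
        have c2 : (decide (y x ≠ y p)) = true := by simpa using hyy
        simp only [ne_eq] at htd hmapcount ⊢
        simp only [c1, c2, cond_true] at *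
        omega
end SpineAux

/-- Let `G` be a finite tree with vertex labeling `y` whose cutsize (number of edges
`{u,v}` with `y u ≠ y v`) is `f`.  Then there exists a walk `w` in `G` visiting every
vertex such that the number of steps of `w` whose two endpoints have different labels
is at most `2·f`. -/
theorem tree_spine_reduction {V α : Type*} [Fintype V] [DecidableEq α]
    (G : SimpleGraph V) (hG : G.IsTree) (y : V → α) (f : ℕ)
    (hf : f = {e ∈ G.edgeSet | ∃ u v, e = s(u, v) ∧ y u ≠ y v}.ncard) :
    ∃ (a b : V) (w : G.Walk a b),
      (∀ v : V, v ∈ w.support) ∧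
      (w.darts.filter (fun d => y d.fst ≠ y d.snd)).length ≤ 2 * f := by
  obtain ⟨a, w, hcov, hcut⟩ := SpineAux.aux (Fintype.card V) G rfl hG y
  exact ⟨a, a, w, hcov, hf ▸ hcut⟩
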